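/- For every b > 0, one has s_b = limsup_{n→∞} s_{n,b}, where for each n ∈ ℕ, s_{n,b} denotes the unique number in [0,1] satisfying β_n^ν(s_{n,b}) = b·s_{n,b} (which exists and is unique since β_n^ν is continuous, non-increasing, with β_n^ν(0) ≥ 0 and β_n^ν(1) = 0) (Lemma 2.4, first part). -/

import Mathlib

open MeasureTheory Filter
open scoped ENNReal

noncomputable section

/-- The half-open unit cube `(0,1]^m`. -/
def unitCube (m : ℕ) : Set (Fin m → ℝ) := {x | ∀ i, x i ∈ Set.Ioc (0 : ℝ) 1}

/-- The half-open dyadic cube of generation `n` indexed by `l ∈ ℤ^m`. -/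
def dyadicCube (m n : ℕ) (l : Fin m → ℤ) : Set (Fin m → ℝ) :=
  {x | ∀ i, x i ∈ Set.Ioc ((l i : ℝ) / 2 ^ n) (((l i : ℝ) + 1) / 2 ^ n)}

/-- `β_n^ν(s) = log (∑_{C ∈ 𝒟_n} ν(C)^s) / log (2^n)`, the sum running over all
dyadic cubes of generation `n` with positive `ν`-measure. -/
def betaN (m : ℕ) (ν : Measure (Fin m → ℝ)) (n : ℕ) (s : ℝ) : ℝ :=
  Real.log (∑' l : {l : Fin m → ℤ // 0 < ν (dyadicCube m n l)},
      (ν (dyadicCube m n l.1)).toReal ^ s) / Real.log ((2 : ℝ) ^ n)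

/-- The `L^q`-spectrum `β_ν(s) = limsup_n β_n^ν(s)`. -/
def lqSpectrum (m : ℕ) (ν : Measure (Fin m → ℝ)) (s : ℝ) : ℝ :=
  limsup (fun n => betaN m ν n s) atTop

/-- `s_b = inf {s > 0 : β_ν(s) - b·s ≤ 0}`. -/
def sb (m : ℕ) (ν : Measure (Fin m → ℝ)) (b : ℝ) : ℝ :=
  sInf {s : ℝ | 0 < s ∧ lqSpectrum m ν s - b * s ≤ 0}

def box (m n : ℕ) : Finset (Fin m → ℤ) :=
  Fintype.piFinset fun _ : Fin m => Finset.Ico (0:ℤ) (2^n)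

open scoped Classical in
def suppF (m : ℕ) (ν : Measure (Fin m → ℝ)) (n : ℕ) : Finset (Fin m → ℤ) :=
  (box m n).filter fun l => 0 < ν (dyadicCube m n l)

lemma measurableSet_dyadicCube {m n : ℕ} {l : Fin m → ℤ} :
    MeasurableSet (dyadicCube m n l) := by
  have : dyadicCube m n l =
      ⋂ i, (fun x : Fin m → ℝ => x i) ⁻¹' Set.Ioc ((l i : ℝ) / 2 ^ n) (((l i : ℝ) + 1) / 2 ^ n) := by
    ext x; simp [dyadicCube, Set.mem_iInter]
  rw [this]
  exact MeasurableSet.iInter fun i => (measurable_pi_apply i) measurableSet_Ioc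

lemma measurableSet_unitCube {m : ℕ} : MeasurableSet (unitCube m) := by
  have : unitCube m = ⋂ i, (fun x : Fin m → ℝ => x i) ⁻¹' Set.Ioc (0:ℝ) 1 := by
    ext x; simp [unitCube, Set.mem_iInter]
  rw [this]
  exact MeasurableSet.iInter fun i => (measurable_pi_apply i) measurableSet_Ioc

lemma dyadicCube_disjoint {m n : ℕ} {l l' : Fin m → ℤ} (h : l ≠ l') :
    Disjoint (dyadicCube m n l) (dyadicCube m n l') := by
  rw [Set.disjoint_left]
  intro x hx hx'
  obtain ⟨i, hi⟩ := Function.ne_iff.mp h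
  have h2n : (0:ℝ) < 2 ^ n := by positivity
  have h1 := hx i
  have h2 := hx' i
  rcases lt_or_gt_of_ne hi with hlt | hlt
  · have hc : ((l i : ℝ) + 1) ≤ (l' i : ℝ) := by exact_mod_cast hlt
    have A : ((l i : ℝ) + 1) / 2 ^ n ≤ (l' i : ℝ) / 2 ^ n := by gcongr
    linarith [h1.2, h2.1]
  · have hc : ((l' i : ℝ) + 1) ≤ (l i : ℝ) := by exact_mod_cast hlt
    have A : ((l' i : ℝ) + 1) / 2 ^ n ≤ (l i : ℝ) / 2 ^ n := by gcongr
    linarith [h2.2, h1.1]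

lemma mem_box_iff {m n : ℕ} {l : Fin m → ℤ} :
    l ∈ box m n ↔ ∀ i, 0 ≤ l i ∧ l i < 2 ^ n := by
  simp [box, Fintype.mem_piFinset, Finset.mem_Ico]

lemma dyadicCube_subset_unitCube {m n : ℕ} {l : Fin m → ℤ} (hl : l ∈ box m n) :
    dyadicCube m n l ⊆ unitCube m := by
  intro x hx i
  have hli := (mem_box_iff.mp hl) i
  have h2n : (0:ℝ) < 2 ^ n := by positivity
  have hx1 : (l i : ℝ) / 2 ^ n < x i := (hx i).1
  have hx2 : x i ≤ ((l i : ℝ) + 1) / 2 ^ n := (hx i).2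
  have hl0 : (0:ℝ) ≤ (l i : ℝ) := by exact_mod_cast hli.1
  have hl1 : ((l i : ℝ) + 1) ≤ 2 ^ n := by
    have : (l i : ℝ) + 1 ≤ ((2:ℤ) ^ n : ℤ) := by exact_mod_cast hli.2
    simpa using this
  constructor
  · exact lt_of_le_of_lt (by positivity) hx1
  · exact hx2.trans (by rw [div_le_one h2n]; exact hl1)

lemma unitCube_eq_biUnion (m n : ℕ) :
    unitCube m = ⋃ l ∈ box m n, dyadicCube m n l := by
  apply Set.Subset.antisymm
  · intro x hx
    have h2n : (0:ℝ) < 2 ^ n := by positivity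
    simp only [Set.mem_iUnion, exists_prop]
    refine ⟨fun i => ⌈x i * 2 ^ n⌉ - 1, ?_, ?_⟩
    · rw [mem_box_iff]
      intro i
      have hxi := hx i
      have ht0 : 0 < x i * 2 ^ n := mul_pos hxi.1 h2n
      have ht1 : x i * 2 ^ n ≤ 2 ^ n := by nlinarith [hxi.2]
      constructor
      · have : 0 < ⌈x i * 2 ^ n⌉ := Int.ceil_pos.mpr ht0
        omega
      · have : ⌈x i * 2 ^ n⌉ ≤ 2 ^ n := Int.ceil_le.mpr (by exact_mod_cast ht1)
        omega
    · intro i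
      have hxi := hx i
      constructor
      · rw [div_lt_iff₀ h2n]
        push_cast
        have := Int.ceil_lt_add_one (x i * 2 ^ n)
        linarith
      · rw [le_div_iff₀ h2n]
        push_cast
        have := Int.le_ceil (x i * 2 ^ n)
        linarith
  · exact Set.iUnion₂_subset fun l hl => dyadicCube_subset_unitCube hl

variable {m : ℕ} {ν : Measure (Fin m → ℝ)}

lemma sum_box (ν : Measure (Fin m → ℝ)) [IsProbabilityMeasure ν]
    (hν : ν (unitCube m) = 1) (n : ℕ) :
    ∑ l ∈ box m n, ν (dyadicCube m n l) = 1 := by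
  rw [← measure_biUnion_finset ?_ fun l _ => measurableSet_dyadicCube]
  · rw [← unitCube_eq_biUnion m n, hν]
  · intro a _ b _ hab
    exact dyadicCube_disjoint hab

lemma pos_mem_box [IsProbabilityMeasure ν] (hν : ν (unitCube m) = 1) {n : ℕ}
    {l : Fin m → ℤ} (h : 0 < ν (dyadicCube m n l)) : l ∈ box m n := by
  have hUc : ν (unitCube m)ᶜ = 0 := by
    rw [measure_compl measurableSet_unitCube (by simp [hν]), hν, measure_univ, tsub_self]
  have hdiff : ν (dyadicCube m n l \ unitCube m) = 0 :=
    measure_mono_null (Set.diff_subset_compl _ _) hUc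
  have hpos : 0 < ν (dyadicCube m n l ∩ unitCube m) := by
    have := measure_inter_add_diff (μ := ν) (dyadicCube m n l) measurableSet_unitCube
    rw [hdiff, add_zero] at this
    rwa [this]
  obtain ⟨x, hxC, hxU⟩ := nonempty_of_measure_ne_zero hpos.ne'
  rw [mem_box_iff]
  intro i
  have h2n : (0:ℝ) < 2 ^ n := by positivity
  have h1 : (l i : ℝ) / 2 ^ n < x i := (hxC i).1
  have h2 : x i ≤ ((l i : ℝ) + 1) / 2 ^ n := (hxC i).2
  have h3 : 0 < x i := (hxU i).1
  have h4 : x i ≤ 1 := (hxU i).2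
  constructor
  · have : (0:ℝ) < (l i : ℝ) + 1 := by
      by_contra hc
      push_neg at hc
      have : ((l i : ℝ) + 1) / 2 ^ n ≤ 0 := div_nonpos_of_nonpos_of_nonneg hc h2n.le
      linarith
    have : (-1 : ℤ) < l i := by exact_mod_cast (by linarith : (-1:ℝ) < (l i : ℝ))
    omega
  · have : (l i : ℝ) < 2 ^ n := by
      rw [div_lt_iff₀ h2n] at h1
      nlinarith
    exact_mod_cast (by push_cast; linarith : (l i : ℝ) < ((2:ℤ)^n : ℤ))

lemma mem_suppF_iff {n : ℕ} [IsProbabilityMeasure ν] (hν : ν (unitCube m) = 1)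
    {l : Fin m → ℤ} : l ∈ suppF m ν n ↔ 0 < ν (dyadicCube m n l) := by
  classical
  simp only [suppF, Finset.mem_filter]
  exact ⟨fun h => h.2, fun h => ⟨pos_mem_box hν h, h⟩⟩

lemma sum_suppF (ν : Measure (Fin m → ℝ)) [IsProbabilityMeasure ν]
    (hν : ν (unitCube m) = 1) (n : ℕ) :
    ∑ l ∈ suppF m ν n, ν (dyadicCube m n l) = 1 := by
  classical
  rw [suppF, Finset.sum_filter_of_ne, sum_box ν hν n]
  intro x _ hx
  exact pos_iff_ne_zero.mpr hx

section Phi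
open Finset
variable {ι : Type*} (F : Finset ι) (p : ι → ℝ)

lemma phi_pos (hpos : ∀ l ∈ F, 0 < p l) (hne : F.Nonempty) (s : ℝ) :
    0 < ∑ l ∈ F, p l ^ s :=
  Finset.sum_pos (fun l hl => Real.rpow_pos_of_pos (hpos l hl) s) hne

lemma phi_continuous (hpos : ∀ l ∈ F, 0 < p l) :
    Continuous fun s : ℝ => ∑ l ∈ F, p l ^ s := by
  apply continuous_finset_sum
  intro l hl
  exact continuous_const.rpow continuous_id fun x => Or.inl (hpos l hl).ne'

lemma phi_anti (hpos : ∀ l ∈ F, 0 < p l) (hle : ∀ l ∈ F, p l ≤ 1) {s t : ℝ} (hst : s ≤ t) :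
    ∑ l ∈ F, p l ^ t ≤ ∑ l ∈ F, p l ^ s :=
  Finset.sum_le_sum fun l hl => Real.rpow_le_rpow_of_exponent_ge (hpos l hl) (hle l hl) hst

lemma phi_one (hsum : ∑ l ∈ F, p l = 1) : ∑ l ∈ F, p l ^ (1:ℝ) = 1 := by
  simp only [Real.rpow_one]; exact hsum

lemma phi_le_card (hpos : ∀ l ∈ F, 0 < p l) (hle : ∀ l ∈ F, p l ≤ 1) {s : ℝ} (hs : 0 ≤ s) :
    ∑ l ∈ F, p l ^ s ≤ (F.card : ℝ) := by
  calc ∑ l ∈ F, p l ^ s ≤ ∑ _l ∈ F, (1:ℝ) :=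
        Finset.sum_le_sum fun l hl => Real.rpow_le_one (hpos l hl).le (hle l hl) hs
    _ = (F.card : ℝ) := by simp

lemma phi_ge_card (hpos : ∀ l ∈ F, 0 < p l) (hsum : ∑ l ∈ F, p l = 1) (hne : F.Nonempty)
    {s : ℝ} (hs : 0 ≤ s) :
    ((F.card : ℝ))⁻¹ ^ s ≤ ∑ l ∈ F, p l ^ s := by
  have hcard : (0:ℝ) < F.card := by exact_mod_cast Finset.card_pos.mpr hne
  obtain ⟨l, hl, hpl⟩ : ∃ l ∈ F, (F.card : ℝ)⁻¹ ≤ p l := by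
    by_contra hc
    push_neg at hc
    have : ∑ l ∈ F, p l < ∑ _l ∈ F, (F.card : ℝ)⁻¹ :=
      Finset.sum_lt_sum_of_nonempty hne hc
    rw [hsum, Finset.sum_const, nsmul_eq_mul, mul_inv_cancel₀ hcard.ne'] at this
    exact lt_irrefl _ this
  calc ((F.card : ℝ))⁻¹ ^ s ≤ p l ^ s :=
        Real.rpow_le_rpow (by positivity) hpl hs
    _ ≤ ∑ l ∈ F, p l ^ s :=
        Finset.single_le_sum (fun l hl => (Real.rpow_pos_of_pos (hpos l hl) s).le) hl

lemma phi_jensen (hpos : ∀ l ∈ F, 0 < p l) (hsum : ∑ l ∈ F, p l = 1)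
    {s u : ℝ} (hs : 0 ≤ s) (hsu : s < u) (hu : u < 1) :
    (∑ l ∈ F, p l ^ u) ^ ((1 - s)/(1 - u)) ≤ ∑ l ∈ F, p l ^ s := by
  set q := (1 - s)/(1 - u) with hqdef
  have h1u : 0 < 1 - u := by linarith
  have hq : 1 ≤ q := by rw [hqdef, le_div_iff₀ h1u]; linarith
  have key := Real.rpow_arith_mean_le_arith_mean_rpow F p (fun l => p l ^ (u - 1))
    (fun l hl => (hpos l hl).le) hsum
    (fun l hl => (Real.rpow_pos_of_pos (hpos l hl) _).le) hq
  have e1 : ∑ l ∈ F, p l * p l ^ (u - 1) = ∑ l ∈ F, p l ^ u :=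
    Finset.sum_congr rfl fun l hl => by
      have h : p l * p l ^ (u - 1) = p l ^ (1 + (u - 1)) := by
        rw [Real.rpow_add (hpos l hl), Real.rpow_one]
      rw [h]; norm_num
  have huq : (u - 1) * q = s - 1 := by
    rw [hqdef]; field_simp; ring
  have e2 : ∑ l ∈ F, p l * (p l ^ (u - 1)) ^ q = ∑ l ∈ F, p l ^ s :=
    Finset.sum_congr rfl fun l hl => by
      rw [← Real.rpow_mul (hpos l hl).le, huq]
      have h : p l * p l ^ (s - 1) = p l ^ (1 + (s - 1)) := by
        rw [Real.rpow_add (hpos l hl), Real.rpow_one]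
      rw [h]; norm_num
  rw [e1, e2] at key
  exact key

end Phi
section BetaN
variable {m : ℕ} {ν : Measure (Fin m → ℝ)}

/-- abbreviation for the weights -/
def pw (m : ℕ) (ν : Measure (Fin m → ℝ)) (n : ℕ) (l : Fin m → ℤ) : ℝ :=
  (ν (dyadicCube m n l)).toReal

lemma betaN_eq' [IsProbabilityMeasure ν] (hν : ν (unitCube m) = 1) (n : ℕ) (s : ℝ) :
    betaN m ν n s =
      Real.log (∑ l ∈ suppF m ν n, pw m ν n l ^ s) / Real.log ((2:ℝ) ^ n) := by
  unfold betaN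
  congr 2
  have hset : {l : Fin m → ℤ | 0 < ν (dyadicCube m n l)} = ↑(suppF m ν n) := by
    ext l
    simp only [Set.mem_setOf_eq, Finset.coe_sort_coe, Finset.mem_coe]
    exact (mem_suppF_iff hν).symm
  calc (∑' l : {l : Fin m → ℤ // 0 < ν (dyadicCube m n l)},
          (ν (dyadicCube m n l.1)).toReal ^ s)
      = ∑' l : ({l : Fin m → ℤ | 0 < ν (dyadicCube m n l)} : Set (Fin m → ℤ)),
          pw m ν n (l : Fin m → ℤ) ^ s := rfl
    _ = ∑' x, Set.indicator {l : Fin m → ℤ | 0 < ν (dyadicCube m n l)}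
          (fun l => pw m ν n l ^ s) x :=
        tsum_subtype {l : Fin m → ℤ | 0 < ν (dyadicCube m n l)} (fun l => pw m ν n l ^ s)
    _ = ∑' x, Set.indicator (↑(suppF m ν n)) (fun l => pw m ν n l ^ s) x := by rw [hset]
    _ = ∑' l : ((suppF m ν n : Set (Fin m → ℤ))), pw m ν n (l : Fin m → ℤ) ^ s :=
        (tsum_subtype _ _).symm
    _ = ∑ l ∈ suppF m ν n, pw m ν n l ^ s :=
        Finset.tsum_subtype' (suppF m ν n) (fun l => pw m ν n l ^ s)

lemma pw_pos [IsProbabilityMeasure ν] (hν : ν (unitCube m) = 1) {n : ℕ} :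
    ∀ l ∈ suppF m ν n, 0 < pw m ν n l := fun l hl =>
  ENNReal.toReal_pos ((mem_suppF_iff hν).mp hl).ne' (measure_ne_top ν _)

lemma pw_le_one {n : ℕ} [IsProbabilityMeasure ν] :
    ∀ l ∈ suppF m ν n, pw m ν n l ≤ 1 := fun l _ => by
  have h := prob_le_one (μ := ν) (s := dyadicCube m n l)
  have := ENNReal.toReal_mono (by simp) h
  simpa [pw] using this

lemma pw_sum [IsProbabilityMeasure ν] (hν : ν (unitCube m) = 1) (n : ℕ) :
    ∑ l ∈ suppF m ν n, pw m ν n l = 1 := by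
  have h := sum_suppF ν hν n
  have := congrArg ENNReal.toReal h
  rw [ENNReal.toReal_sum (fun l _ => measure_ne_top ν _)] at this
  simpa [pw] using this

lemma suppF_nonempty [IsProbabilityMeasure ν] (hν : ν (unitCube m) = 1) (n : ℕ) :
    (suppF m ν n).Nonempty := by
  by_contra h
  rw [Finset.not_nonempty_iff_eq_empty] at h
  have := pw_sum hν n
  rw [h] at this
  simp at this

lemma suppF_card_le [IsProbabilityMeasure ν] (n : ℕ) :
    (suppF m ν n).card ≤ 2 ^ (n * m) := by
  classical
  calc (suppF m ν n).card ≤ (box m n).card := Finset.card_le_card (Finset.filter_subset _ _)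
    _ = 2 ^ (n * m) := by
        rw [box, Fintype.card_piFinset]
        simp only [Int.card_Ico, sub_zero, Finset.prod_const, Finset.card_univ,
          Fintype.card_fin]
        have h2 : ((2:ℤ)^n).toNat = 2^n := by
          have h := Int.toNat_of_nonneg (by positivity : (0:ℤ) ≤ (2:ℤ)^n)
          exact_mod_cast h
        rw [h2, pow_mul]

lemma log_pow_pos {n : ℕ} (hn : 1 ≤ n) : 0 < Real.log ((2:ℝ) ^ n) := by
  apply Real.log_pos
  calc (1:ℝ) < 2 := one_lt_two
    _ = 2 ^ 1 := (pow_one 2).symm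
    _ ≤ 2 ^ n := pow_le_pow_right₀ one_le_two hn

lemma betaN_zero_n (s : ℝ) : betaN m ν 0 s = 0 := by
  unfold betaN
  simp

lemma betaN_anti [IsProbabilityMeasure ν] (hν : ν (unitCube m) = 1) (n : ℕ)
    {s t : ℝ} (hst : s ≤ t) : betaN m ν n t ≤ betaN m ν n s := by
  rcases Nat.eq_zero_or_pos n with rfl | hn
  · rw [betaN_zero_n, betaN_zero_n]
  · rw [betaN_eq' hν, betaN_eq' hν]
    rw [div_le_div_iff_of_pos_right (log_pow_pos hn)]
    apply Real.log_le_log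
    · exact phi_pos _ _ (pw_pos hν) (suppF_nonempty hν n) t
    · exact phi_anti _ _ (pw_pos hν) pw_le_one hst

lemma betaN_one_eq [IsProbabilityMeasure ν] (hν : ν (unitCube m) = 1) {n : ℕ}
    (hn : 1 ≤ n) : betaN m ν n 1 = 0 := by
  rw [betaN_eq' hν, phi_one _ _ (pw_sum hν n), Real.log_one, zero_div]

lemma betaN_zero_nonneg [IsProbabilityMeasure ν] (hν : ν (unitCube m) = 1) (n : ℕ) :
    0 ≤ betaN m ν n 0 := by
  rcases Nat.eq_zero_or_pos n with rfl | hn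
  · rw [betaN_zero_n]
  · rw [betaN_eq' hν]
    apply div_nonneg _ (log_pow_pos hn).le
    apply Real.log_nonneg
    have : ∑ l ∈ suppF m ν n, pw m ν n l ^ (0:ℝ) = ((suppF m ν n).card : ℝ) := by
      rw [Finset.sum_congr rfl fun l hl => Real.rpow_zero (pw m ν n l)]
      simp
    rw [this]
    exact_mod_cast Finset.card_pos.mpr (suppF_nonempty hν n)

lemma betaN_continuous [IsProbabilityMeasure ν] (hν : ν (unitCube m) = 1) (n : ℕ) :
    Continuous fun s => betaN m ν n s := by
  have h : (fun s => betaN m ν n s) =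
      fun s => Real.log (∑ l ∈ suppF m ν n, pw m ν n l ^ s) / Real.log ((2:ℝ) ^ n) := by
    funext s; exact betaN_eq' hν n s
  rw [h]
  apply Continuous.div_const
  apply Continuous.log (phi_continuous _ _ (pw_pos hν))
  intro s
  exact (phi_pos _ _ (pw_pos hν) (suppF_nonempty hν n) s).ne'

lemma betaN_le_m [IsProbabilityMeasure ν] (hν : ν (unitCube m) = 1) (n : ℕ)
    {s : ℝ} (hs : 0 ≤ s) : betaN m ν n s ≤ (m : ℝ) := by
  rcases Nat.eq_zero_or_pos n with rfl | hn
  · rw [betaN_zero_n]; exact_mod_cast Nat.zero_le m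
  · rw [betaN_eq' hν]
    rw [div_le_iff₀ (log_pow_pos hn)]
    have h1 : Real.log (∑ l ∈ suppF m ν n, pw m ν n l ^ s)
        ≤ Real.log ((2:ℝ) ^ (n * m)) := by
      apply Real.log_le_log (phi_pos _ _ (pw_pos hν) (suppF_nonempty hν n) s)
      calc ∑ l ∈ suppF m ν n, pw m ν n l ^ s ≤ ((suppF m ν n).card : ℝ) :=
            phi_le_card _ _ (pw_pos hν) pw_le_one hs
        _ ≤ (2:ℝ) ^ (n * m) := by exact_mod_cast suppF_card_le n
    calc Real.log (∑ l ∈ suppF m ν n, pw m ν n l ^ s) ≤ Real.log ((2:ℝ) ^ (n * m)) := h1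
      _ = (n * m : ℝ) * Real.log 2 := by rw [Real.log_pow]; push_cast; ring
      _ = (m : ℝ) * Real.log ((2:ℝ) ^ n) := by rw [Real.log_pow]; push_cast; ring

lemma betaN_ge_neg [IsProbabilityMeasure ν] (hν : ν (unitCube m) = 1) (n : ℕ)
    {s : ℝ} (hs : 0 ≤ s) : -((m : ℝ) * s) ≤ betaN m ν n s := by
  rcases Nat.eq_zero_or_pos n with rfl | hn
  · rw [betaN_zero_n]
    have : (0:ℝ) ≤ (m : ℝ) * s := by positivity
    linarith
  · rw [betaN_eq' hν]
    rw [le_div_iff₀ (log_pow_pos hn)]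
    have hcard : (0:ℝ) < ((suppF m ν n).card : ℝ) := by
      exact_mod_cast Finset.card_pos.mpr (suppF_nonempty hν n)
    have h0 : ((2:ℝ) ^ (n * m))⁻¹ ^ s ≤ ∑ l ∈ suppF m ν n, pw m ν n l ^ s := by
      calc ((2:ℝ) ^ (n * m))⁻¹ ^ s ≤ (((suppF m ν n).card : ℝ))⁻¹ ^ s := by
            apply Real.rpow_le_rpow (by positivity) _ hs
            apply inv_anti₀ hcard
            exact_mod_cast suppF_card_le n
        _ ≤ ∑ l ∈ suppF m ν n, pw m ν n l ^ s :=
            phi_ge_card _ _ (pw_pos hν) (pw_sum hν n) (suppF_nonempty hν n) hs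
    have h2 : Real.log (((2:ℝ) ^ (n * m))⁻¹ ^ s)
        ≤ Real.log (∑ l ∈ suppF m ν n, pw m ν n l ^ s) :=
      Real.log_le_log (by positivity) h0
    have h3 : Real.log (((2:ℝ) ^ (n * m))⁻¹ ^ s) = -(s * ((n * m : ℝ) * Real.log 2)) := by
      rw [Real.log_rpow (by positivity), Real.log_inv, Real.log_pow]
      push_cast; ring
    have h4 : -((m:ℝ) * s) * Real.log ((2:ℝ) ^ n) = -(s * ((n * m : ℝ) * Real.log 2)) := by
      rw [Real.log_pow]; push_cast; ring
    rw [h4, ← h3]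
    exact h2

lemma betaN_jensen [IsProbabilityMeasure ν] (hν : ν (unitCube m) = 1) {n : ℕ}
    (hn : 1 ≤ n) {s u : ℝ} (hs : 0 ≤ s) (hsu : s < u) (hu : u < 1) :
    ((1 - s) / (1 - u)) * betaN m ν n u ≤ betaN m ν n s := by
  rw [betaN_eq' hν, betaN_eq' hν]
  have key := phi_jensen (suppF m ν n) (pw m ν n) (pw_pos hν) (pw_sum hν n) hs hsu hu
  have hposu := phi_pos (suppF m ν n) (pw m ν n) (pw_pos hν) (suppF_nonempty hν n) u
  have h2 : ((1 - s) / (1 - u)) * Real.log (∑ l ∈ suppF m ν n, pw m ν n l ^ u)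
      ≤ Real.log (∑ l ∈ suppF m ν n, pw m ν n l ^ s) := by
    rw [← Real.log_rpow hposu]
    exact Real.log_le_log (Real.rpow_pos_of_pos hposu _) key
  rw [← mul_div_assoc, div_le_div_iff_of_pos_right (log_pow_pos hn)]
  exact h2

end BetaN

/-- **Lemma 2.4, first part**: `s_b = limsup_n s_{n,b}`, where `s_{n,b}` is the unique
number in `[0,1]` with `β_n^ν(s_{n,b}) = b · s_{n,b}` (such a number exists and is
unique). -/
theorem statement4 (m : ℕ) (hm : 0 < m) (ν : Measure (Fin m → ℝ))
    [IsProbabilityMeasure ν] (hν : ν (unitCube m) = 1) (b : ℝ) (hb : 0 < b) :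
    (∀ n : ℕ, ∃! s : ℝ, s ∈ Set.Icc (0 : ℝ) 1 ∧ betaN m ν n s = b * s) ∧
    ∀ σ : ℕ → ℝ, (∀ n : ℕ, σ n ∈ Set.Icc (0 : ℝ) 1 ∧ betaN m ν n (σ n) = b * σ n) →
      sb m ν b = limsup σ atTop := by
  have uniq : ∀ n : ℕ, ∀ a c : ℝ, betaN m ν n a = b * a → betaN m ν n c = b * c →
      a ≤ c → c ≤ a := by
    intro n a c ha hc hac
    have h := betaN_anti hν n hac
    rw [ha, hc] at h
    exact (mul_le_mul_iff_right₀ hb).mp h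
  constructor
  · intro n
    rcases Nat.eq_zero_or_pos n with rfl | hn
    · refine ⟨0, ⟨⟨le_refl 0, zero_le_one⟩, by rw [betaN_zero_n]; ring⟩, ?_⟩
      rintro y ⟨_, hye⟩
      rw [betaN_zero_n] at hye
      rcases mul_eq_zero.mp hye.symm with h | h
      · exact absurd h hb.ne'
      · exact h
    · set g : ℝ → ℝ := fun s => betaN m ν n s - b * s with hg
      have hgc : ContinuousOn g (Set.Icc 0 1) :=
        ((betaN_continuous hν n).sub (continuous_const.mul continuous_id)).continuousOn
      have hg1 : g 1 ≤ 0 := by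
        simp only [hg, betaN_one_eq hν hn, mul_one, zero_sub]
        linarith
      have hg0 : 0 ≤ g 0 := by
        simp only [hg, mul_zero, sub_zero]
        exact betaN_zero_nonneg hν n
      obtain ⟨s, hsmem, hgs⟩ := intermediate_value_Icc' zero_le_one hgc ⟨hg1, hg0⟩
      have hse : betaN m ν n s = b * s := by
        have : betaN m ν n s - b * s = 0 := hgs
        linarith
      refine ⟨s, ⟨hsmem, hse⟩, ?_⟩
      rintro y ⟨_, hye⟩
      rcases le_total y s with h | h
      · exact le_antisymm h (uniq n y s hye hse h)
      · exact le_antisymm (uniq n s y hse hye h) h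
  · intro σ hσ
    set L := limsup σ atTop with hL
    have hσ0 : ∀ n, 0 ≤ σ n := fun n => (hσ n).1.1
    have hσ1 : ∀ n, σ n ≤ 1 := fun n => (hσ n).1.2
    have hbdd : IsBoundedUnder (· ≤ ·) atTop σ := isBoundedUnder_of ⟨1, hσ1⟩
    have hcob : IsCoboundedUnder (· ≤ ·) atTop σ := isCoboundedUnder_le_of_le atTop hσ0
    have hL0 : 0 ≤ L := le_limsup_of_frequently_le (Filter.Frequently.of_forall hσ0) hbdd
    have hSbdd : BddBelow {s : ℝ | 0 < s ∧ lqSpectrum m ν s - b * s ≤ 0} :=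
      ⟨0, fun x hx => hx.1.le⟩
    have hSne : Set.Nonempty {s : ℝ | 0 < s ∧ lqSpectrum m ν s - b * s ≤ 0} := by
      refine ⟨2, two_pos, ?_⟩
      have h1 : ∀ n, betaN m ν n 2 ≤ 0 := by
        intro n
        rcases Nat.eq_zero_or_pos n with rfl | hn
        · rw [betaN_zero_n]
        · calc betaN m ν n 2 ≤ betaN m ν n 1 := betaN_anti hν n one_le_two
            _ = 0 := betaN_one_eq hν hn
      have h2 : lqSpectrum m ν 2 ≤ 0 :=
        limsup_le_of_le
          (isCoboundedUnder_le_of_le atTop (fun n => betaN_ge_neg hν n (by norm_num : (0:ℝ) ≤ 2)))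
          (Filter.Eventually.of_forall h1)
      nlinarith
    have hub : sb m ν b ≤ L := by
      apply le_of_forall_gt_imp_ge_of_dense
      intro c hc
      have hc0 : 0 < c := lt_of_le_of_lt hL0 hc
      have hev : ∀ᶠ n in atTop, σ n < c := eventually_lt_of_limsup_lt hc hbdd
      have hev2 : ∀ᶠ n in atTop, betaN m ν n c ≤ b * c := by
        filter_upwards [hev] with n hn
        calc betaN m ν n c ≤ betaN m ν n (σ n) := betaN_anti hν n hn.le
          _ = b * σ n := (hσ n).2
          _ ≤ b * c := by nlinarith
      have hlim : lqSpectrum m ν c ≤ b * c :=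
        limsup_le_of_le
          (isCoboundedUnder_le_of_le atTop (fun n => betaN_ge_neg hν n hc0.le)) hev2
      exact csInf_le hSbdd ⟨hc0, by linarith⟩
    have hlb : L ≤ sb m ν b := by
      apply le_csInf hSne
      rintro s ⟨hs0, hsle⟩
      by_contra hcon
      push_neg at hcon
      set c := (s + L) / 2 with hcdef
      have hc1 : s < c := by rw [hcdef]; linarith
      have hc2 : c < L := by rw [hcdef]; linarith
      have hfreq : ∃ᶠ n in atTop, c < σ n := frequently_lt_of_lt_limsup hcob hc2
      have hfreq2 : ∃ᶠ n in atTop, (c < σ n ∧ 1 ≤ n) :=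
        hfreq.and_eventually (eventually_ge_atTop 1)
      have hkey : ∃ᶠ n in atTop, b * s + b * (c - s) ≤ betaN m ν n s := by
        apply hfreq2.mono
        rintro n ⟨hn1, hn2⟩
        have hσlt1 : σ n < 1 := by
          rcases lt_or_eq_of_le (hσ1 n) with h | h
          · exact h
          · exfalso
            have h2 := (hσ n).2
            rw [h, betaN_one_eq hν hn2] at h2
            nlinarith
        have hsu : s < σ n := lt_trans hc1 hn1
        have hjen := betaN_jensen hν hn2 hs0.le hsu hσlt1
        rw [(hσ n).2] at hjen
        have h1u : 0 < 1 - σ n := by linarith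
        have hq1 : 1 ≤ (1 - s) / (1 - σ n) := by
          rw [le_div_iff₀ h1u]; linarith
        have hbσ : 0 ≤ b * σ n := mul_nonneg hb.le (hσ0 n)
        calc b * s + b * (c - s) ≤ b * σ n := by nlinarith
          _ ≤ ((1 - s) / (1 - σ n)) * (b * σ n) := le_mul_of_one_le_left hbσ hq1
          _ ≤ betaN m ν n s := hjen
      have hup : b * s + b * (c - s) ≤ lqSpectrum m ν s :=
        le_limsup_of_frequently_le hkey
          (isBoundedUnder_of ⟨(m : ℝ), fun n => betaN_le_m hν n hs0.le⟩)
      nlinarith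
    exact le_antisymm hub hlb

end
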